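/- Let Δ be a countably infinite ordered homogeneous Ramsey structure with relational signature and let c₁, …, cₙ be elements of Δ. Then the expansion (Δ, c₁, …, cₙ) is again ordered, homogeneous, and Ramsey. -/

import Mathlib

open FirstOrder FirstOrder.Language

namespace PaperDef

/-- The structure `M` is *ordered*: some binary relation symbol of the signature
denotes a linear order on the domain. -/
def Ordered (L : Language) (M : Type*) [L.Structure M] : Prop :=
  ∃ r : L.Relations 2, IsLinearOrder M (fun a b => Structure.RelMap r ![a, b])

/-- A class of structures is a *Ramsey class*. -/
def RamseyClass {L : Language} (K : Set (CategoryTheory.Bundled.{0} L.Structure)) : Prop :=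
  ∀ k : ℕ, 1 ≤ k → ∀ H ∈ K, ∀ P ∈ K, ∃ S ∈ K,
    ∀ χ : {Q : L.Substructure S // Nonempty (P ≃[L] Q)} → Fin k,
      ∃ e : H ↪[L] S,
        ∀ Q₁ Q₂ : {Q : L.Substructure S // Nonempty (P ≃[L] Q)},
          (Q₁.1 : Set S) ⊆ Set.range e → (Q₂.1 : Set S) ⊆ Set.range e → χ Q₁ = χ Q₂

/-- `M` is *finitely bounded*: membership of a finite(ly generated) structure in the age of `M`
is characterized by finitely many forbidden substructures. -/
def FinitelyBounded (L : Language) (M : Type) [L.Structure M] : Prop :=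
  ∃ (k : ℕ) (F : Fin k → CategoryTheory.Bundled.{0} L.Structure),
    (∀ i, Structure.FG L (F i)) ∧
    ∀ A : CategoryTheory.Bundled.{0} L.Structure, Structure.FG L A →
      (A ∈ L.age M ↔ ∀ i, ¬ Nonempty ((F i) ↪[L] A))

/-- The `L'`-structure on `M` is a *reduct* of the `L`-structure on `M`:
every relation of the former is first-order definable in the latter. -/
def IsReduct (L L' : Language) (M : Type*) [L.Structure M] [L'.Structure M] : Prop :=
  ∀ (n : ℕ) (r : L'.Relations n), ∃ φ : L.Formula (Fin n),
    ∀ x : Fin n → M, Structure.RelMap r x ↔ φ.Realize x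

/-- Two `n`-tuples have the same (complete first-order) type. -/
def SameType (L : Language) (M : Type*) [L.Structure M] {n : ℕ} (a b : Fin n → M) : Prop :=
  ∀ φ : L.Formula (Fin n), φ.Realize a ↔ φ.Realize b

/-- A function is *canonical*: it maps tuples of equal types to tuples of equal types. -/
def Canonical (L L' : Language) (X Ω : Type*) [L.Structure X] [L'.Structure Ω]
    (f : X → Ω) : Prop :=
  ∀ (n : ℕ) (a b : Fin n → X), SameType L X a b →
    SameType L' Ω (fun i => f (a i)) (fun i => f (b i))

/-- A function is *canonical on a set `F`*. -/
def CanonicalOn (L L' : Language) (X Ω : Type*) [L.Structure X] [L'.Structure Ω]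
    (F : Set X) (f : X → Ω) : Prop :=
  ∀ (n : ℕ) (a b : Fin n → X), (∀ i, a i ∈ F) → (∀ i, b i ∈ F) → SameType L X a b →
    SameType L' Ω (fun i => f (a i)) (fun i => f (b i))

/-- `M` is ω-categorical: every countable model of its complete theory is isomorphic to it. -/
def OmegaCategorical (L : Language) (M : Type) [L.Structure M] : Prop :=
  ∀ (N : Type) [L.Structure N], Countable N →
    (∀ φ : L.Sentence, φ ∈ L.completeTheory M → N ⊨ φ) → Nonempty (M ≃[L] N)

/-- Primitive positive formulas: built from atomic formulas using `∧` and `∃`. -/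
inductive IsPrimitivePositive {L : Language} {α : Type*} :
    ∀ {n : ℕ}, L.BoundedFormula α n → Prop
  | atomic {n : ℕ} {φ : L.BoundedFormula α n} (h : φ.IsAtomic) : IsPrimitivePositive φ
  | inf {n : ℕ} {φ ψ : L.BoundedFormula α n} :
      IsPrimitivePositive φ → IsPrimitivePositive ψ → IsPrimitivePositive (φ ⊓ ψ)
  | ex {n : ℕ} {φ : L.BoundedFormula α (n + 1)} :
      IsPrimitivePositive φ → IsPrimitivePositive φ.ex

/-- Existential formulas: existentially quantified quantifier-free formulas. -/
inductive IsExistential {L : Language} {α : Type*} :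
    ∀ {n : ℕ}, L.BoundedFormula α n → Prop
  | of_isQF {n : ℕ} {φ : L.BoundedFormula α n} (h : φ.IsQF) : IsExistential φ
  | ex {n : ℕ} {φ : L.BoundedFormula α (n + 1)} : IsExistential φ → IsExistential φ.ex

/-- Existential positive formulas: built from atomic formulas using `∧`, `∨` and `∃`. -/
inductive IsExistentialPositive {L : Language} {α : Type*} :
    ∀ {n : ℕ}, L.BoundedFormula α n → Prop
  | atomic {n : ℕ} {φ : L.BoundedFormula α n} (h : φ.IsAtomic) : IsExistentialPositive φ
  | inf {n : ℕ} {φ ψ : L.BoundedFormula α n} :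
      IsExistentialPositive φ → IsExistentialPositive ψ → IsExistentialPositive (φ ⊓ ψ)
  | sup {n : ℕ} {φ ψ : L.BoundedFormula α n} :
      IsExistentialPositive φ → IsExistentialPositive ψ → IsExistentialPositive (φ ⊔ ψ)
  | ex {n : ℕ} {φ : L.BoundedFormula α (n + 1)} :
      IsExistentialPositive φ → IsExistentialPositive φ.ex

/-- A `k`-ary operation *preserves* an `m`-ary relation. -/
def Preserves {D : Type*} {k m : ℕ} (f : (Fin k → D) → D) (R : (Fin m → D) → Prop) : Prop :=
  ∀ rows : Fin k → Fin m → D, (∀ j, R (rows j)) → R (fun i => f (fun j => rows j i))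

/-- A unary operation *preserves* an `m`-ary relation. -/
def Preserves1 {D : Type*} {m : ℕ} (f : D → D) (R : (Fin m → D) → Prop) : Prop :=
  ∀ a : Fin m → D, R a → R (fun i => f (a i))

/-- An endomorphism of the structure `M`. -/
def IsEndo (L : Language) (M : Type*) [L.Structure M] (f : M → M) : Prop :=
  ∀ (n : ℕ) (r : L.Relations n) (x : Fin n → M),
    Structure.RelMap r x → Structure.RelMap r (fun i => f (x i))

/-- A self-embedding of the structure `M`. -/
def IsSelfEmb (L : Language) (M : Type*) [L.Structure M] (f : M → M) : Prop :=
  Function.Injective f ∧ ∀ (n : ℕ) (r : L.Relations n) (x : Fin n → M),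
    (Structure.RelMap r (fun i => f (x i)) ↔ Structure.RelMap r x)

/-- A polymorphism of the structure `M`. -/
def IsPoly (L : Language) (M : Type*) [L.Structure M] {k : ℕ} (f : (Fin k → M) → M) : Prop :=
  ∀ (n : ℕ) (r : L.Relations n), Preserves f (fun x : Fin n → M => Structure.RelMap r x)

/-- The set of endomorphisms of `M`. -/
def EndSet (L : Language) (M : Type*) [L.Structure M] : Set (M → M) :=
  {f | IsEndo L M f}

/-- Two tuples lie in the same orbit of the automorphism group. -/
def SameOrbit (L : Language) (M : Type*) [L.Structure M] {n : ℕ} (a b : Fin n → M) : Prop :=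
  ∃ α : M ≃[L] M, ∀ i, α (a i) = b i

/-- The subsets `s` and `t` induce isomorphic substructures. -/
def SetIso (L : Language) (X : Type*) [L.Structure X] (s t : Set X) : Prop :=
  ∃ g : s ≃ t, ∀ (n : ℕ) (r : L.Relations n) (x : Fin n → s),
    (Structure.RelMap r (fun j => ((x j : X))) ↔ Structure.RelMap r (fun j => ((g (x j) : t) : X)))

/-- The `L[[Fin n]]`-structure on `M` obtained by naming the constants `c 0, …, c (n-1)`. -/
def withConstantsStruct (L : Language) {M : Type*} [L.Structure M] {n : ℕ} (c : Fin n → M) :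
    (L[[Fin n]]).Structure M :=
  letI := constantsOn.structure c
  inferInstance

/-- Two sequences of `n` tuples from a product `Ξ₁ × ⋯ × Ξₘ` have the same type:
componentwise, the corresponding `n`-tuples have the same type. -/
def SameSeqType {m : ℕ} (Ls : Fin m → Language) (Xs : Fin m → Type*)
    [∀ i, (Ls i).Structure (Xs i)] {n : ℕ} (a b : Fin n → ∀ i, Xs i) : Prop :=
  ∀ i, SameType (Ls i) (Xs i) (fun j => a j i) (fun j => b j i)

/-- A function defined on a product of structures is canonical. -/
def CanonicalProd {m : ℕ} (Ls : Fin m → Language) (Xs : Fin m → Type*)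
    [∀ i, (Ls i).Structure (Xs i)] (L' : Language) (Ω : Type*) [L'.Structure Ω]
    (f : (∀ i, Xs i) → Ω) : Prop :=
  ∀ (n : ℕ) (a b : Fin n → ∀ i, Xs i), SameSeqType Ls Xs a b →
    SameType L' Ω (fun j => f (a j)) (fun j => f (b j))

end PaperDef

namespace PaperDef
section Aux

open FirstOrder.Language.Structure

variable {L : Language} {n : ℕ}

/-- Any set is a substructure in a relational language. -/
def relSub (hrel : ∀ i, IsEmpty (L.Functions i)) {X : Type*} [L.Structure X] (s : Set X) :
    L.Substructure X :=
  ⟨s, fun {m} f => ((hrel m).elim f)⟩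

lemma funMap0 {L'' : Language} {X : Type*} [L''.Structure X] (f : L''.Functions 0)
    (x y : Fin 0 → X) : funMap f x = funMap f y :=
  congrArg _ (funext fun i => i.elim0)

/-- The interpretation of the `i`-th constant. -/
def conInterp {X : Type*} [(L[[Fin n]]).Structure X] (i : Fin n) : X :=
  Structure.funMap (L := L[[Fin n]]) ((Sum.inr i : L.Functions 0 ⊕ (Fin n)) :
    (L[[Fin n]]).Functions 0) finZeroElim

lemma emb_conInterp {X Y : Type*} [(L[[Fin n]]).Structure X] [(L[[Fin n]]).Structure Y]
    (φ : X ↪[L[[Fin n]]] Y) (i : Fin n) : φ (conInterp (L := L) i) = conInterp (L := L) i := by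
  refine (φ.map_fun' _ finZeroElim).trans (funMap0 _ _ _)

lemma equiv_conInterp {X Y : Type*} [(L[[Fin n]]).Structure X] [(L[[Fin n]]).Structure Y]
    (φ : X ≃[L[[Fin n]]] Y) (i : Fin n) : φ (conInterp (L := L) i) = conInterp (L := L) i := by
  refine (φ.map_fun' _ finZeroElim).trans (funMap0 _ _ _)

lemma sub_conInterp {X : Type*} [(L[[Fin n]]).Structure X] (S : (L[[Fin n]]).Substructure X)
    (i : Fin n) : ((conInterp (L := L) i : S) : X) = conInterp (L := L) i :=
  funMap0 _ _ _

/-- substructure of an `L[[Fin n]]`-structure from a set closed under the constants. -/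
def mkSubC (hrel : ∀ i, IsEmpty (L.Functions i)) {X : Type*} [(L[[Fin n]]).Structure X]
    (s : Set X) (hc : ∀ i : Fin n, conInterp (L := L) i ∈ s) : (L[[Fin n]]).Substructure X := by
  refine ⟨s, fun {m} f => ?_⟩
  match m, f with
  | 0, Sum.inl f => exact ((hrel 0).elim f)
  | 0, Sum.inr f =>
    intro x _
    have : Structure.funMap (L := L[[Fin n]]) (Sum.inr f) x = conInterp (L := L) f := funMap0 _ _ _
    rw [this]; exact hc f
  | (m+1), Sum.inl f => exact ((hrel (m+1)).elim f)
  | (m+1), Sum.inr f => exact PEmpty.elim f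


/-- A finitely generated `L[[Fin n]]`-structure over a relational `L` is finite. -/
lemma finite_of_fg (hrel : ∀ i, IsEmpty (L.Functions i)) {X : Type*}
    [(L[[Fin n]]).Structure X] (h : Structure.FG (L[[Fin n]]) X) : Finite X := by
  obtain ⟨s, hsfin, hstop⟩ := (Structure.fg_iff).1 h
  have hsub : (Substructure.closure (L[[Fin n]]) s : Set X) ⊆
      s ∪ Set.range (fun i : Fin n => conInterp (L := L) i) := by
    refine Substructure.closure_le (S := mkSubC hrel _ ?_) |>.2 Set.subset_union_left
    exact fun i => Or.inr ⟨i, rfl⟩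
  rw [hstop] at hsub
  have : (Set.univ : Set X).Finite := by
    refine Set.Finite.subset (hsfin.union (Set.finite_range (fun i : Fin n => conInterp (L := L) i))) ?_
    intro x _
    exact hsub (by trivial)
  exact Set.finite_univ_iff.1 this

/-- Rigidity: two relation-preserving bijections out of a finite linearly ordered
structure agree. -/
lemma rigid_eq {X Y : Type*} [Finite X] (s : X → X → Prop) (t : Y → Y → Prop)
    (hs : IsLinearOrder X s) (f g : X ≃ Y)
    (hf : ∀ a b, s a b ↔ t (f a) (f b)) (hg : ∀ a b, s a b ↔ t (g a) (g b)) :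
    ∀ x, f x = g x := by
  classical
  haveI := hs
  set lt : X → X → Prop := fun a b => s a b ∧ a ≠ b with hlt
  haveI htr : IsTrans X lt := ⟨fun a b c hab hbc => by
    refine ⟨Trans.trans hab.1 hbc.1, fun h => ?_⟩
    subst h
    exact hab.2 (hs.toIsPartialOrder.toAntisymm.antisymm _ _ hab.1 hbc.1)⟩
  haveI hir : IsIrrefl X lt := ⟨fun a h => h.2 rfl⟩
  haveI : IsTrichotomous X lt := ⟨by
    intro a b hab hba
    by_contra h
    rcases hs.total a b with h' | h'
    · exact hab ⟨h', h⟩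
    · exact hba ⟨h', Ne.symm h⟩⟩
  haveI : IsWellFounded X lt := ⟨Finite.wellFounded_of_trans_of_irrefl lt⟩
  haveI : IsWellOrder X lt := ⟨⟩
  intro x
  set h : X ≃ X := f.trans g.symm with hh
  have hmono : ∀ a b, lt a b ↔ lt (h a) (h b) := by
    intro a b
    have : s (h a) (h b) ↔ s a b := by
      rw [hg (h a) (h b)]
      simp only [hh, Equiv.trans_apply, Equiv.apply_symm_apply]
      exact (hf a b).symm
    constructor
    · rintro ⟨h1, h2⟩; exact ⟨this.2 h1, fun he => h2 (h.injective he)⟩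
    · rintro ⟨h1, h2⟩; exact ⟨this.1 h1, fun he => h2 (congrArg h he)⟩
  have hx : h x = x := by
    have := InitialSeg.eq_relIso (InitialSeg.refl lt)
      (⟨h, fun {a b} => (hmono a b).symm⟩ : lt ≃r lt) x
    simpa using this
  have hx' : g.symm (f x) = x := hx
  have := congrArg g hx'
  simpa using this

/-- Pull back a linear order along an injection. -/
lemma isLinearOrder_pullback {X Y : Type*} (f : X → Y) (hf : Function.Injective f)
    (s : X → X → Prop) (t : Y → Y → Prop) (h : ∀ a b, s a b ↔ t (f a) (f b))
    (ht : IsLinearOrder Y t) : IsLinearOrder X s := by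
  haveI : IsRefl X s := ⟨fun a => (h a a).2 (ht.toIsPartialOrder.toIsPreorder.refl (f a))⟩
  haveI : IsTrans X s :=
    ⟨fun a b c hab hbc => (h a c).2 (Trans.trans ((h a b).1 hab) ((h b c).1 hbc))⟩
  haveI : IsPreorder X s := ⟨⟩
  haveI : IsAntisymm X s := ⟨fun a b hab hba =>
    hf (ht.toIsPartialOrder.toAntisymm.antisymm _ _ ((h a b).1 hab) ((h b a).1 hba))⟩
  haveI : IsPartialOrder X s := ⟨⟩
  haveI : IsTotal X s := ⟨by
    intro a b
    rcases ht.total (f a) (f b) with h' | h'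
    · exact Or.inl ((h a b).2 h')
    · exact Or.inr ((h b a).2 h')⟩
  exact ⟨⟩


/-- From matching quantifier-free data, an automorphism moving `c` to `q`. -/
lemma exists_auto {M : Type*} [L.Structure M] (hrel : ∀ i, IsEmpty (L.Functions i))
    (hhom : L.IsUltrahomogeneous M) (c q : Fin n → M)
    (hinj : ∀ i j, c i = c j ↔ q i = q j)
    (hrelpres : ∀ (m : ℕ) (r : L.Relations m) (v : Fin m → Fin n),
        RelMap r (fun l => c (v l)) ↔ RelMap r (fun l => q (v l))) :
    ∃ γ : M ≃[L] M, ∀ i, γ (c i) = q i := by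
  classical
  set T : L.Substructure M := relSub hrel (Set.range c) with hT
  have hTfg : T.FG :=
    Substructure.fg_def.2 ⟨Set.range c, Set.finite_range c, Substructure.closure_eq T⟩
  have hmem : ∀ x : T, ∃ i, c i = (x : M) := fun x => x.2
  choose idx hidx using hmem
  set f : T ↪[L] M :=
    { toFun := fun x => q (idx x)
      inj' := by
        intro x y hxy
        exact Subtype.ext (by rw [← hidx x, ← hidx y]; exact (hinj _ _).2 hxy)
      map_fun' := fun {m} f => ((hrel m).elim f)
      map_rel' := by
        intro m r x
        have h1 : (fun l => ((x l) : M)) = fun l => c (idx (x l)) :=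
          funext fun l => (hidx (x l)).symm
        show RelMap r (fun l => q (idx (x l))) ↔ RelMap r (fun l => ((x l) : M))
        rw [h1]
        exact (hrelpres m r fun l => idx (x l)).symm } with hf
  obtain ⟨γ, hγ⟩ := hhom T hTfg f
  refine ⟨γ, fun i => ?_⟩
  have hci : c i ∈ T := ⟨i, rfl⟩
  have h2 := DFunLike.congr_fun hγ (⟨c i, hci⟩ : T)
  have h3 : f ⟨c i, hci⟩ = q i := by
    show q (idx ⟨c i, hci⟩) = q i
    exact (hinj _ _).1 (hidx ⟨c i, hci⟩)
  rw [← h3, h2]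
  rfl


/-- Reduct structure. -/
def reductStr (hrel : ∀ i, IsEmpty (L.Functions i)) {X : Type*}
    (SX : (L[[Fin n]]).Structure X) : L.Structure X where
  funMap := fun {m} f _ => ((hrel m).elim f)
  RelMap := fun {m} r x => SX.RelMap (Sum.inl r) x

/-- Relation-preservation data for a map, with explicit structures. -/
def RelPres (L : Language) {X Y : Type*} (SX : L.Structure X) (SY : L.Structure Y)
    (φ : X → Y) : Prop :=
  ∀ (m : ℕ) (r : L.Relations m) (x : Fin m → X),
    (@RelMap L Y SY m r (fun l => φ (x l)) ↔ @RelMap L X SX m r x)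

lemma RelPres.comp {L : Language} {X Y Z : Type*} {SX : L.Structure X} {SY : L.Structure Y}
    {SZ : L.Structure Z} {φ : X → Y} {ψ : Y → Z} (hφ : RelPres L SX SY φ)
    (hψ : RelPres L SY SZ ψ) : RelPres L SX SZ (fun x => ψ (φ x)) :=
  fun m r x => (hψ m r (fun l => φ (x l))).trans (hφ m r x)

lemma RelPres.bridge {L : Language} {X Y : Type*} {SX : L.Structure X} {SY : L.Structure Y}
    {φ ψ : X → Y} (hφ : RelPres L SX SY φ) (hψ : RelPres L SX SY ψ)
    {m : ℕ} (r : L.Relations m) (x : Fin m → X) :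
    @RelMap L Y SY m r (fun l => φ (x l)) ↔ @RelMap L Y SY m r (fun l => ψ (x l)) :=
  (hφ m r x).trans (hψ m r x).symm

lemma inj_bridge {X Y Z : Type*} {φ : X → Y} {ψ : X → Z}
    (hφ : Function.Injective φ) (hψ : Function.Injective ψ) (a b : X) :
    φ a = φ b ↔ ψ a = ψ b :=
  ⟨fun h => congrArg ψ (hφ h), fun h => congrArg φ (hψ h)⟩


lemma conInterp_withConstants {L : Language} {M : Type*} [L.Structure M] {n : ℕ}
    (c : Fin n → M) (i : Fin n) :
    (@conInterp L n M (withConstantsStruct L c) i) = c i := rfl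

end Aux

/-- **Proposition 6 of the paper.**  Let `Δ` (an `L`-structure on `M`) be a countably infinite
ordered homogeneous Ramsey structure with relational signature and let `c₁, …, cₙ` be elements
of `Δ`.  Then the expansion `(Δ, c₁, …, cₙ)` by constants is again ordered, homogeneous
and Ramsey. -/
theorem expansion_by_constants_is_ordered_homogeneous_Ramsey
    (L : Language) (M : Type) [L.Structure M] [Countable M] [Infinite M]
    (hrel : ∀ i, IsEmpty (L.Functions i))
    (hord : Ordered L M) (hhom : L.IsUltrahomogeneous M) (hram : RamseyClass (L.age M))
    (n : ℕ) (c : Fin n → M) :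
    @Ordered (L[[Fin n]]) M (withConstantsStruct L c) ∧
      @Language.IsUltrahomogeneous (L[[Fin n]]) M (withConstantsStruct L c) ∧
      RamseyClass (@Language.age (L[[Fin n]]) M (withConstantsStruct L c)) := by
  classical
  letI I := withConstantsStruct L c
  obtain ⟨r₀, hr₀⟩ := hord
  refine ⟨⟨Sum.inl r₀, hr₀⟩, ?_, ?_⟩
  · -- homogeneity
    intro S' hS'fg f
    -- the underlying L-substructure
    set T : L.Substructure M := relSub hrel (S' : Set M) with hT
    have hS'fin : (S' : Set M).Finite := by
      obtain ⟨s, hs⟩ := hS'fg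
      have hsub : (S' : Set M) ⊆ ↑s ∪ Set.range c := by
        rw [← hs]
        refine Substructure.closure_le (S := mkSubC hrel _ ?_) |>.2 Set.subset_union_left
        exact fun i => Or.inr ⟨i, rfl⟩
      exact Set.Finite.subset ((s.finite_toSet).union (Set.finite_range c)) hsub
    have hTfg : T.FG :=
      Substructure.fg_def.2 ⟨(S' : Set M), hS'fin, Substructure.closure_eq T⟩
    set f' : T ↪[L] M :=
      { toFun := fun x => f ⟨x.1, x.2⟩
        inj' := by
          intro x y hxy
          have := f.inj' hxy
          exact Subtype.ext (congrArg Subtype.val this)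
        map_fun' := fun {m} fc => ((hrel m).elim fc)
        map_rel' := by
          intro m r x
          exact f.map_rel' (Sum.inl r) (fun l => ⟨(x l).1, (x l).2⟩) } with hf'
    obtain ⟨γ, hγ⟩ := hhom T hTfg f'
    have hγval : ∀ x : T, f ⟨x.1, x.2⟩ = γ x.1 := by
      intro x
      have := DFunLike.congr_fun hγ x
      exact this
    have hci : ∀ i, c i ∈ S' := by
      intro i
      exact S'.fun_mem (Sum.inr i : (L[[Fin n]]).Functions 0) finZeroElim (fun l => l.elim0)
    have hfix : ∀ i, γ (c i) = c i := by
      intro i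
      have h1 : ((conInterp (L := L) i : ↥S') : M) = c i :=
        (sub_conInterp S' i).trans (conInterp_withConstants c i)
      have h2 : f (conInterp (L := L) i) = c i :=
        (emb_conInterp f i).trans (conInterp_withConstants c i)
      have h3 := hγval ⟨c i, hci i⟩
      have h4 : (⟨c i, hci i⟩ : ↥S') = conInterp (L := L) i := Subtype.ext h1.symm
      rw [h4] at h3
      rw [show γ (c i) = f (conInterp (L := L) i) from h3.symm, ← h1]
      exact h2.trans h1.symm
    refine ⟨{ toEquiv := γ.toEquiv
              map_fun' := ?_
              map_rel' := ?_ }, ?_⟩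
    · intro m fc x
      match m, fc with
      | 0, Sum.inl fc => exact ((hrel 0).elim fc)
      | 0, Sum.inr i => exact hfix i
      | (m+1), Sum.inl fc => exact ((hrel (m+1)).elim fc)
      | (m+1), Sum.inr fc => exact PEmpty.elim fc
    · intro m r x
      match r with
      | Sum.inl r => exact γ.map_rel' r x
      | Sum.inr r => exact Empty.elim r
    · apply DFunLike.ext
      intro x
      exact hγval ⟨x.1, x.2⟩
  · -- Ramsey
    intro k hk H hH P hP
    obtain ⟨hHfg, ⟨eH⟩⟩ := hH
    obtain ⟨hPfg, ⟨eP⟩⟩ := hP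
    haveI hHfin : Finite ↥H := finite_of_fg hrel hHfg
    haveI hPfin : Finite ↥P := finite_of_fg hrel hPfg
    haveI : L.IsRelational := hrel
    -- bundled reducts
    have hH₀mem : (⟨↥H, reductStr hrel H.str⟩ : CategoryTheory.Bundled L.Structure) ∈
        L.age M := by
      refine ⟨@Structure.FG.of_finite L ↥H (reductStr hrel H.str) hHfin,
        ⟨{ toFun := eH, inj' := eH.inj',
           map_fun' := fun {m} fc => ((hrel m).elim fc),
           map_rel' := fun {m} r x => eH.map_rel' (Sum.inl r) x }⟩⟩
    have hP₀mem : (⟨↥P, reductStr hrel P.str⟩ : CategoryTheory.Bundled L.Structure) ∈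
        L.age M := by
      refine ⟨@Structure.FG.of_finite L ↥P (reductStr hrel P.str) hPfin,
        ⟨{ toFun := eP, inj' := eP.inj',
           map_fun' := fun {m} fc => ((hrel m).elim fc),
           map_rel' := fun {m} r x => eP.map_rel' (Sum.inl r) x }⟩⟩
    obtain ⟨S₀, hS₀age, hS₀ram⟩ := hram k hk _ hH₀mem _ hP₀mem
    obtain ⟨hS₀fg, ⟨ι⟩⟩ := hS₀age
    haveI hS₀fin : Finite ↥S₀ := Structure.FG.finite hS₀fg
    -- named constants in H and P
    set cH : Fin n → ↥H := fun i => conInterp (L := L) i with hcHdef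
    set cP : Fin n → ↥P := fun i => conInterp (L := L) i with hcPdef
    have hcH : ∀ i, eH (cH i) = c i :=
      fun i => (emb_conInterp eH i).trans (conInterp_withConstants c i)
    have hcP : ∀ i, eP (cP i) = c i :=
      fun i => (emb_conInterp eP i).trans (conInterp_withConstants c i)
    -- choice of automorphisms
    have hγex : ∀ q : Fin n → M, ∃ γ : M ≃[L] M,
        (∃ γ' : M ≃[L] M, ∀ i, γ' (c i) = q i) → ∀ i, γ (c i) = q i := by
      intro q
      by_cases h : ∃ γ' : M ≃[L] M, ∀ i, γ' (c i) = q i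
      · obtain ⟨γ', hγ'⟩ := h
        exact ⟨γ', fun _ => hγ'⟩
      · exact ⟨Language.Equiv.refl L M, fun h' => absurd h' h⟩
    choose γm hγm using hγex
    -- the finite set of positions
    set Pos : Set (Fin n → M) :=
      {q | (∀ i, q i ∈ Set.range ι) ∧ ∃ γ' : M ≃[L] M, ∀ i, γ' (c i) = q i} with hPosdef
    have hPosFin : Pos.Finite := by
      have hsub : Pos ⊆ Set.pi Set.univ (fun _ : Fin n => Set.range ι) :=
        fun q hq i _ => hq.1 i
      exact Set.Finite.subset (Set.Finite.pi (fun i => (Set.finite_range ι))) hsub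
    set Sset : Set M :=
      Set.range c ∪ ⋃ q ∈ Pos, (fun x => (γm q).symm x) '' Set.range ι with hSsetdef
    have hSsetFin : Sset.Finite :=
      (Set.finite_range c).union (hPosFin.biUnion (fun q _ => ((Set.finite_range ι).image _)))
    set Sb : (L[[Fin n]]).Substructure M := mkSubC hrel Sset
      (fun i => Or.inl ⟨i, (conInterp_withConstants c i).symm⟩) with hSbdef
    haveI hSbfin : Finite ↥Sb := hSsetFin.to_subtype
    refine ⟨⟨↥Sb, inferInstance⟩, ⟨Structure.FG.of_finite, ⟨Sb.subtype⟩⟩, ?_⟩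
    intro χ
    letI iP : L.Structure ↥P := reductStr hrel P.str
    letI iH : L.Structure ↥H := reductStr hrel H.str
    -- RelPres facts
    have hRPeP : RelPres L iP ‹L.Structure M› ⇑eP := fun m r x => eP.map_rel' (Sum.inl r) x
    have hRPeH : RelPres L iH ‹L.Structure M› ⇑eH := fun m r x => eH.map_rel' (Sum.inl r) x
    have hRPι : RelPres L _ ‹L.Structure M› ⇑ι := fun m r x => ι.map_rel' r x
    -- position of a copy of the constants moved by an iso to a substructure of S₀
    have hp' : ∀ (Q' : L.Substructure ↥S₀) (j : ↥P ≃[L] ↥Q'),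
        (fun i => ι ((j (cP i) : ↥S₀))) ∈ Pos := by
      intro Q' j
      have hinjψ : Function.Injective (fun y : ↥P => ι ((j y : ↥S₀))) := by
        intro a b hab
        exact j.toEquiv.injective (Subtype.ext (ι.injective hab))
      constructor
      · exact fun i => ⟨_, rfl⟩
      · apply exists_auto hrel hhom
        · intro i i'
          rw [← hcP i, ← hcP i']
          exact inj_bridge eP.injective hinjψ (cP i) (cP i')
        · intro m r v
          have h1 : (fun l => c (v l)) = fun l => eP (cP (v l)) :=
            funext fun l => (hcP (v l)).symm
          rw [h1]
          have hRPj : RelPres L iP _ ⇑j := fun m r x => j.map_rel' r x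
          have hRPval : RelPres L _ _ (fun z : ↥Q' => (z : ↥S₀)) := fun m r x => Iff.rfl
          exact RelPres.bridge hRPeP ((hRPj.comp hRPval).comp hRPι) r (fun l => cP (v l))
    -- construction of the associated copies in Sb
    have hDex : ∀ Q' : {Q' : L.Substructure ↥S₀ // Nonempty (↥P ≃[L] ↥Q')},
        ∃ D : (L[[Fin n]]).Substructure ↥Sb,
          Nonempty (↥P ≃[L[[Fin n]]] ↥D) ∧
          ∀ x : ↥Sb, x ∈ D ↔ ∃ y : ↥P,
            (γm (fun i => ι ((Q'.2.some (cP i) : ↥S₀)))).symm (ι ((Q'.2.some y : ↥S₀)))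
              = (x : M) := by
      intro Q'
      obtain ⟨Qs, hQs⟩ := Q'
      set j := (⟨Qs, hQs⟩ : {Q' : L.Substructure ↥S₀ // Nonempty (↥P ≃[L] ↥Q')}).2.some with hj
      set p' : Fin n → M := fun i => ι ((j (cP i) : ↥S₀)) with hp'def
      have hpp : p' ∈ Pos := hp' Qs j
      set F : ↥P → M := fun y => (γm p').symm (ι ((j y : ↥S₀))) with hFdef
      have hFc : ∀ i, F (cP i) = c i := by
        intro i
        have h1 := hγm p' hpp.2 i
        show (γm p').symm (ι ((j (cP i) : ↥S₀))) = c i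
        rw [show ι ((j (cP i) : ↥S₀)) = p' i from rfl, ← h1]
        exact (γm p').toEquiv.symm_apply_apply (c i)
      have hFinj : Function.Injective F := by
        intro a b hab
        exact j.toEquiv.injective (Subtype.ext (ι.injective ((γm p').symm.toEquiv.injective hab)))
      have hFsub : ∀ y, F y ∈ Sset := by
        intro y
        refine Or.inr (Set.mem_biUnion hpp ⟨ι ((j y : ↥S₀)), ⟨_, rfl⟩, rfl⟩)
      have hRPF : RelPres L iP ‹L.Structure M› F := by
        have hRPj : RelPres L iP _ ⇑j := fun m r x => j.map_rel' r x
        have hRPval : RelPres L _ _ (fun z : ↥Qs => (z : ↥S₀)) := fun m r x => Iff.rfl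
        have hRPsymm : RelPres L ‹L.Structure M› ‹L.Structure M› ⇑(γm p').symm :=
          fun m r x => (γm p').symm.map_rel' r x
        exact ((hRPj.comp hRPval).comp hRPι).comp hRPsymm
      refine ⟨mkSubC hrel {x : ↥Sb | ∃ y : ↥P, F y = (x : M)} ?_, ⟨?_⟩, fun x => Iff.rfl⟩
      · intro i
        refine ⟨cP i, (hFc i).trans ?_⟩
        exact ((sub_conInterp Sb i).trans (conInterp_withConstants c i)).symm
      · refine
          { toEquiv := Equiv.ofBijective
              (fun y => ⟨⟨F y, hFsub y⟩, ⟨y, rfl⟩⟩) ⟨?_, ?_⟩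
            map_fun' := ?_
            map_rel' := ?_ }
        · intro a b hab
          exact hFinj (congrArg Subtype.val (congrArg Subtype.val hab))
        · rintro ⟨x, y, hy⟩
          exact ⟨y, Subtype.ext (Subtype.ext hy)⟩
        · intro m fc x
          match m, fc with
          | 0, Sum.inl fc => exact ((hrel 0).elim fc)
          | 0, Sum.inr i =>
            refine Subtype.ext (Subtype.ext ?_)
            show F (Structure.funMap (L := L[[Fin n]]) (Sum.inr i) x) = _
            rw [show (Structure.funMap (L := L[[Fin n]]) (Sum.inr i) x : ↥P) = cP i from funMap0 _ _ _]
            exact (hFc i).trans rfl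
          | (m+1), Sum.inl fc => exact ((hrel (m+1)).elim fc)
          | (m+1), Sum.inr fc => exact PEmpty.elim fc
        · intro m r x
          match r with
          | Sum.inl r => exact hRPF m r x
          | Sum.inr r => exact Empty.elim r
    choose D hDiso hDspec using hDex
    obtain ⟨g, hg⟩ := hS₀ram (fun Q' => χ ⟨D Q', hDiso Q'⟩)
    have hRPg : RelPres L iH _ ⇑g := fun m r x => g.map_rel' r x
    set p : Fin n → M := fun i => ι (g (cH i)) with hpdef
    have hpPos : p ∈ Pos := by
      constructor
      · exact fun i => ⟨_, rfl⟩
      · apply exists_auto hrel hhom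
        · intro i i'
          rw [← hcH i, ← hcH i']
          exact inj_bridge eH.injective (fun a b hab => g.injective (ι.injective hab)) (cH i) (cH i')
        · intro m r v
          have h1 : (fun l => c (v l)) = fun l => eH (cH (v l)) :=
            funext fun l => (hcH (v l)).symm
          rw [h1]
          exact RelPres.bridge hRPeH (hRPg.comp hRPι) r (fun l => cH (v l))
    have hemem : ∀ x : ↥H, (γm p).symm (ι (g x)) ∈ Sset := by
      intro x
      exact Or.inr (Set.mem_biUnion hpPos ⟨ι (g x), ⟨_, rfl⟩, rfl⟩)
    set e : ↥H ↪[L[[Fin n]]] ↥Sb :=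
      { toFun := fun x => ⟨(γm p).symm (ι (g x)), hemem x⟩
        inj' := by
          intro x y hxy
          exact g.injective (ι.injective ((γm p).symm.toEquiv.injective
            (congrArg Subtype.val hxy)))
        map_fun' := by
          intro m fc x
          match m, fc with
          | 0, Sum.inl fc => exact ((hrel 0).elim fc)
          | 0, Sum.inr i =>
            refine Subtype.ext ?_
            show (γm p).symm (ι (g (Structure.funMap (L := L[[Fin n]]) (Sum.inr i) x))) = _
            rw [show (Structure.funMap (L := L[[Fin n]]) (Sum.inr i) x : ↥H) = cH i from funMap0 _ _ _]
            have h1 := hγm p hpPos.2 i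
            rw [show ι (g (cH i)) = p i from rfl, ← h1]
            exact ((γm p).toEquiv.symm_apply_apply (c i)).trans rfl
          | (m+1), Sum.inl fc => exact ((hrel (m+1)).elim fc)
          | (m+1), Sum.inr fc => exact PEmpty.elim fc
        map_rel' := by
          intro m r x
          match r with
          | Sum.inl r =>
            have hRPsymm : RelPres L ‹L.Structure M› ‹L.Structure M› ⇑(γm p).symm :=
              fun m r x => (γm p).symm.map_rel' r x
            exact ((hRPg.comp hRPι).comp hRPsymm) m r x
          | Sum.inr r => exact Empty.elim r } with hedef
    refine ⟨e, ?_⟩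
    -- the linear order on P, for rigidity
    have hvec : ∀ {X Y : Type} (f : X → Y) (a b : X), (f ∘ ![a, b]) = ![f a, f b] := by
      intro X Y f a b
      funext l
      fin_cases l <;> rfl
    set sP : ↥P → ↥P → Prop :=
      fun a b => Structure.RelMap (L := L[[Fin n]]) (Sum.inl r₀) ![a, b] with hsPdef
    have hsPlin : IsLinearOrder ↥P sP := by
      refine isLinearOrder_pullback (⇑eP) eP.injective sP
        (fun a b => Structure.RelMap r₀ ![a, b]) ?_ hr₀
      intro a b
      have h1 := eP.map_rel (Sum.inl r₀) ![a, b]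
      rw [hvec (⇑eP) a b] at h1
      exact h1.symm
    -- the key transfer
    have hkey : ∀ Q : {Q : (L[[Fin n]]).Substructure ↥Sb // Nonempty (↥P ≃[L[[Fin n]]] ↥Q)},
        ((Q.1 : Set ↥Sb) ⊆ Set.range ⇑e) →
        ∃ Q' : {Q' : L.Substructure ↥S₀ // Nonempty (↥P ≃[L] ↥Q')},
          ((Q'.1 : Set ↥S₀) ⊆ Set.range ⇑g) ∧ χ Q = χ ⟨D Q', hDiso Q'⟩ := by
      intro Q hQ
      set em := Q.2.some with hemdef
      have hu : ∀ y : ↥P, ∃ z : ↥H, e z = ((em y : ↥Q.1) : ↥Sb) := by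
        intro y
        exact hQ (em y).2
      choose u hu using hu
      set w : ↥P → ↥S₀ := fun y => g (u y) with hwdef
      have hwinj : Function.Injective w := by
        intro a b hab
        have h2 : u a = u b := g.injective hab
        have h3 : ((em a : ↥Q.1) : ↥Sb) = ((em b : ↥Q.1) : ↥Sb) := by
          rw [← hu a, ← hu b, h2]
        exact em.toEquiv.injective (Subtype.ext h3)
      have hRPu : RelPres L iP iH u := by
        intro m r x
        have h1 := e.map_rel (Sum.inl r) (fun l => u (x l))
        rw [show (⇑e ∘ fun l => u (x l)) = fun l => ((em (x l) : ↥Q.1) : ↥Sb) from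
          funext fun l => hu (x l)] at h1
        have h2 := em.map_rel (Sum.inl r) x
        exact h1.symm.trans h2
      have hRPw : RelPres L iP _ w := hRPu.comp hRPg
      set wiso : ↥P ≃[L] ↥(relSub hrel (Set.range w)) :=
        { toEquiv := Equiv.ofBijective (fun y => ⟨w y, ⟨y, rfl⟩⟩)
            ⟨fun a b hab => hwinj (congrArg Subtype.val hab),
             fun x => by
               obtain ⟨x, y, hy⟩ := x
               exact ⟨y, Subtype.ext hy⟩⟩
          map_fun' := fun {m} fc => ((hrel m).elim fc)
          map_rel' := fun {m} r x => hRPw m r x } with hwisodef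
      have hwiso : Nonempty (↥P ≃[L] ↥(relSub hrel (Set.range w))) := ⟨wiso⟩
      refine ⟨⟨relSub hrel (Set.range w), hwiso⟩, ?_, ?_⟩
      · rintro z ⟨y, rfl⟩
        exact ⟨u y, rfl⟩
      set jc := (⟨relSub hrel (Set.range w), hwiso⟩ :
        {Q' : L.Substructure ↥S₀ // Nonempty (↥P ≃[L] ↥Q')}).2.some with hjcdef
      have hrig : ∀ y, (jc y : ↥S₀) = w y := by
        have h4 := rigid_eq sP
          (fun a b : ↥(relSub hrel (Set.range w)) => Structure.RelMap (L := L) r₀ ![a, b])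
          hsPlin jc.toEquiv wiso.toEquiv
          (fun a b => by
            have h5 := jc.map_rel r₀ ![a, b]
            rw [hvec (⇑jc) a b] at h5
            exact h5.symm)
          (fun a b => by
            have h5 := wiso.map_rel r₀ ![a, b]
            rw [hvec (⇑wiso) a b] at h5
            exact h5.symm)
        intro y
        have h6 := congrArg Subtype.val (h4 y)
        exact h6
      have hjcp : (fun i => ι ((jc (cP i) : ↥S₀))) = p := by
        funext i
        rw [hrig (cP i)]
        have h6 : ((em (cP i) : ↥Q.1) : ↥Sb) = e (u (cP i)) := (hu (cP i)).symm
        have h7 : (((em (cP i) : ↥Q.1) : ↥Sb) : M) = c i := by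
          rw [show cP i = conInterp (L := L) i from rfl]
          rw [equiv_conInterp em i]
          exact ((congrArg Subtype.val (sub_conInterp Q.1 i)).trans
            ((sub_conInterp Sb i).trans (conInterp_withConstants c i)))
        have h10 : (γm p).symm (ι (w (cP i))) = c i := by
          show ((e (u (cP i)) : ↥Sb) : M) = c i
          rw [← h6]
          exact h7
        have h11 := hγm p hpPos.2 i
        rw [← h10] at h11
        rw [Language.Equiv.apply_symm_apply] at h11
        exact h11
      refine congrArg χ (Subtype.ext ?_)
      apply SetLike.ext
      intro x
      rw [hDspec ⟨relSub hrel (Set.range w), hwiso⟩ x]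
      rw [← hjcdef, hjcp]
      constructor
      · intro hx
        refine ⟨em.symm ⟨x, hx⟩, ?_⟩
        rw [hrig]
        show ((e (u (em.symm ⟨x, hx⟩)) : ↥Sb) : M) = ↑x
        rw [hu (em.symm ⟨x, hx⟩)]
        rw [show em (em.symm ⟨x, hx⟩) = ⟨x, hx⟩ from em.apply_symm_apply _]
      · rintro ⟨y, hy⟩
        rw [hrig y] at hy
        have h12 : ((e (u y) : ↥Sb) : M) = ↑x := hy
        have h13 : ((em y : ↥Q.1) : ↥Sb) = x :=
          Subtype.val_injective ((congrArg Subtype.val (hu y)).symm.trans h12)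
        rw [← h13]
        exact (em y).2
    intro Q₁ Q₂ h₁ h₂
    obtain ⟨Q'₁, hg₁, he₁⟩ := hkey Q₁ h₁
    obtain ⟨Q'₂, hg₂, he₂⟩ := hkey Q₂ h₂
    rw [he₁, he₂]
    exact hg Q'₁ Q'₂ hg₁ hg₂

end PaperDef
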